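/- For every integer a ≥ 1, every λ ∈ [0,1) and every t with 0 < t < 1: | ∑_{j=0}^{a−1} exp(−4t sin²(π(j+λ)/a)) − a e^{−2t} I₀(2t) | ≤ 2a e^{−2t} I₀(2t) · t^a/(1 − t^a). -/

import Mathlib

open Real Filter

/-- Modified Bessel function of the first kind of integer order `m`,
`I_m(t) = ∑_{j=0}^∞ (t/2)^{2j+|m|} / (j! (j+|m|)!)`. -/
noncomputable def besselI (m : ℤ) (t : ℝ) : ℝ :=
  ∑' j : ℕ, (t / 2) ^ (2 * j + m.natAbs) /
    ((Nat.factorial j : ℝ) * (Nat.factorial (j + m.natAbs) : ℝ))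

lemma sum_root_vanish (a : ℕ) (ha : 1 ≤ a) (lam : ℝ) (p q : ℕ)
    (hm : ¬ ((a:ℤ) ∣ ((p:ℤ) - q))) :
    ∑ j ∈ Finset.range a,
      (Complex.exp (((2*π*((j:ℝ)+lam)/a : ℝ) : ℂ) * Complex.I)) ^ p *
      ((Complex.exp (((2*π*((j:ℝ)+lam)/a : ℝ) : ℂ) * Complex.I))⁻¹) ^ q = 0 := by
  have ha0 : (a:ℝ) ≠ 0 := by positivity
  have haC : (a:ℂ) ≠ 0 := by exact_mod_cast (by positivity : (a:ℝ) ≠ 0)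
  have hπ : (π:ℝ) ≠ 0 := Real.pi_ne_zero
  set m : ℤ := (p:ℤ) - q with hm'
  have hterm : ∀ j ∈ Finset.range a,
      (Complex.exp (((2*π*((j:ℝ)+lam)/a : ℝ) : ℂ) * Complex.I)) ^ p *
      ((Complex.exp (((2*π*((j:ℝ)+lam)/a : ℝ) : ℂ) * Complex.I))⁻¹) ^ q
      = Complex.exp (((2*π*(m:ℝ)*lam/a : ℝ) : ℂ) * Complex.I) *
        (Complex.exp (((2*π*(m:ℝ)/a : ℝ) : ℂ) * Complex.I)) ^ j := by
    intro j _
    rw [← Complex.exp_neg, ← Complex.exp_nat_mul, ← Complex.exp_nat_mul,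
      ← Complex.exp_nat_mul, ← Complex.exp_add, ← Complex.exp_add]
    congr 1
    push_cast [hm']
    field_simp
    ring
  rw [Finset.sum_congr rfl hterm, ← Finset.mul_sum]
  set ζ : ℂ := Complex.exp (((2*π*(m:ℝ)/a : ℝ) : ℂ) * Complex.I) with hζ
  have hζa : ζ ^ a = 1 := by
    rw [hζ, ← Complex.exp_nat_mul]
    have : (a:ℂ) * (((2*π*(m:ℝ)/a : ℝ) : ℂ) * Complex.I) = (m:ℂ) * (2*π*Complex.I) := by
      push_cast; field_simp
    rw [this]
    exact Complex.exp_int_mul_two_pi_mul_I m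
  have hζ1 : ζ ≠ 1 := by
    intro h
    rw [hζ, Complex.exp_eq_one_iff] at h
    obtain ⟨n, hn⟩ := h
    have h2 : ((2*π*(m:ℝ)/a : ℝ) : ℂ) * Complex.I = ((2*π*(n:ℝ) : ℝ) : ℂ) * Complex.I := by
      rw [hn]; push_cast; ring
    have h3 := mul_right_cancel₀ Complex.I_ne_zero h2
    rw [Complex.ofReal_inj] at h3
    rw [div_eq_iff ha0] at h3
    have h6 : (m:ℝ) = (n:ℝ) * a :=
      mul_left_cancel₀ (by positivity : (2*π:ℝ) ≠ 0) (by linear_combination h3)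
    apply hm
    refine ⟨n, ?_⟩
    have h7 : (m:ℝ) = (a:ℝ) * n := by linear_combination h6
    exact_mod_cast h7
  rw [geom_sum_eq hζ1, hζa]
  simp

lemma v_summable (a : ℕ) (t : ℝ) (ht : 0 ≤ t) (ht1 : t < 1) :
    Summable (fun d : ℕ => if (a:ℤ) ∣ ((d:ℤ)+1) then t^(d+1) else 0) := by
  refine Summable.of_nonneg_of_le (fun d => ?_) (fun d => ?_)
    (summable_geometric_of_lt_one ht ht1)
  · positivity
  · by_cases h : (a:ℤ) ∣ ((d:ℤ)+1) <;> simp only [h, if_true, if_false]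
    · calc t^(d+1) = t^d * t := by ring
        _ ≤ t^d * 1 := by
            have : (0:ℝ) ≤ t^d := by positivity
            nlinarith
        _ = t^d := by ring
    · positivity

lemma v_tsum (a : ℕ) (ha : 1 ≤ a) (t : ℝ) (ht : 0 ≤ t) (ht1 : t < 1) :
    ∑' d : ℕ, (if (a:ℤ) ∣ ((d:ℤ)+1) then t^(d+1) else 0) = t^a / (1 - t^a) := by
  set v : ℕ → ℝ := fun d => if (a:ℤ) ∣ ((d:ℤ)+1) then t^(d+1) else 0 with hv
  have hi : Function.Injective (fun k : ℕ => a*(k+1)-1) := by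
    intro x y hxy
    simp only at hxy
    have hx : 1*1 ≤ a*(x+1) := Nat.mul_le_mul ha (by omega)
    have hy : 1*1 ≤ a*(y+1) := Nat.mul_le_mul ha (by omega)
    rw [one_mul] at hx hy
    have : a*(x+1) = a*(y+1) := by omega
    have := Nat.eq_of_mul_eq_mul_left (by omega : 0 < a) this
    omega
  have hsupp : Function.support v ⊆ Set.range (fun k : ℕ => a*(k+1)-1) := by
    intro d hd
    simp only [hv, Function.mem_support, ne_eq, ite_eq_right_iff, not_forall] at hd
    obtain ⟨⟨c, hc⟩, -⟩ := hd
    have hcpos : 0 < c := by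
      by_contra h
      push_neg at h
      have h2 : (a:ℤ) * c ≤ 0 := mul_nonpos_of_nonneg_of_nonpos (by positivity) h
      omega
    have h3 : (↑(a * c.toNat) : ℤ) = (d:ℤ) + 1 := by
      push_cast [Int.toNat_of_nonneg hcpos.le]
      omega
    have h4 : a * c.toNat = d + 1 := by exact_mod_cast h3
    refine ⟨c.toNat - 1, ?_⟩
    have h9 : c.toNat - 1 + 1 = c.toNat := by omega
    simp only
    rw [h9]
    omega
  have heq := hi.tsum_eq (f := v) hsupp
  rw [← heq]
  have hval : ∀ k : ℕ, v (a*(k+1)-1) = (t^a) * (t^a)^k := by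
    intro k
    have hA : 1*1 ≤ a*(k+1) := Nat.mul_le_mul ha (by omega)
    rw [one_mul] at hA
    have h1 : (a*(k+1)-1 : ℕ) + 1 = a*(k+1) := by omega
    have h2 : ((a*(k+1)-1 : ℕ) : ℤ) + 1 = (a:ℤ) * ((k:ℤ)+1) := by
      push_cast [Nat.cast_sub hA]
      ring
    simp only [hv]
    rw [if_pos ⟨(k:ℤ)+1, h2⟩, h1, pow_mul, pow_succ']
  rw [tsum_congr hval, tsum_mul_left,
    tsum_geometric_of_lt_one (by positivity) (pow_lt_one₀ ht ht1 (by omega)), div_eq_mul_inv]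

set_option maxHeartbeats 1000000 in
/-- Comparison of the twisted discrete-circle theta function with `a e^{−2t} I₀(2t)`:
`|θ(t) − a e^{−2t} I₀(2t)| ≤ 2a e^{−2t} I₀(2t) t^a/(1−t^a)` for `0 < t < 1`. -/
theorem theta_bessel_comparison
    (a : ℕ) (ha : 1 ≤ a) (lam : ℝ) (hlam : lam ∈ Set.Ico (0 : ℝ) 1)
    (t : ℝ) (ht : 0 < t) (ht1 : t < 1) :
    |(∑ j ∈ Finset.range a,
        Real.exp (-4 * t * Real.sin (π * ((j : ℝ) + lam) / (a : ℝ)) ^ 2))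
      - (a : ℝ) * Real.exp (-2 * t) * besselI 0 (2 * t)|
      ≤ 2 * (a : ℝ) * Real.exp (-2 * t) * besselI 0 (2 * t) * (t ^ a / (1 - t ^ a)) := by
  have ha0 : (a:ℝ) ≠ 0 := by positivity
  set c : ℕ → ℂ := fun j => Complex.exp (((2*π*((j:ℝ)+lam)/a : ℝ) : ℂ) * Complex.I) with hcdef
  have hcnorm : ∀ j, ‖c j‖ = 1 := fun j => by
    rw [hcdef]
    exact Complex.norm_exp_ofReal_mul_I _
  have hcinvnorm : ∀ j, ‖(c j)⁻¹‖ = 1 := fun j => by rw [norm_inv, hcnorm]; norm_num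
  have hcne : ∀ j, c j ≠ 0 := fun j => Complex.exp_ne_zero _
  -- STEP A : pointwise identity
  have stepA : ∀ j : ℕ,
      ((Real.exp (-4 * t * Real.sin (π * ((j : ℝ) + lam) / (a : ℝ)) ^ 2) : ℝ) : ℂ)
      = Complex.exp ((-2*t : ℝ) : ℂ) *
        (Complex.exp ((t:ℂ) * c j) * Complex.exp ((t:ℂ) * (c j)⁻¹)) := by
    intro j
    have hsin : -4 * t * Real.sin (π * ((j : ℝ) + lam) / (a : ℝ)) ^ 2
        = -2*t + 2*t*Real.cos (2*π*((j:ℝ)+lam)/a) := by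
      have h := Real.sin_sq_eq_half_sub (π*((j:ℝ)+lam)/a)
      have h2x : 2*(π*((j:ℝ)+lam)/a) = 2*π*((j:ℝ)+lam)/a := by ring
      rw [h2x] at h
      linear_combination (-4*t) * h
    have harg : (t:ℂ) * c j + (t:ℂ) * (c j)⁻¹
        = ((2*t*Real.cos (2*π*((j:ℝ)+lam)/a) : ℝ) : ℂ) := by
      simp only [hcdef]
      rw [← Complex.exp_neg]
      push_cast [Complex.ofReal_cos]
      simp only [Complex.cos, neg_mul]
      ring
    have harg2 : ((-2*t + 2*t*Real.cos (2*π*((j:ℝ)+lam)/a) : ℝ) : ℂ)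
        = ((-2*t : ℝ):ℂ) + ((t:ℂ) * c j + (t:ℂ) * (c j)⁻¹) := by
      rw [harg]; push_cast; ring
    rw [hsin, Complex.ofReal_exp, harg2, Complex.exp_add, Complex.exp_add]
  -- summability of exponential series
  have hnorm_term : ∀ (z:ℂ), ‖z‖ = 1 → ∀ p:ℕ,
      ‖((t:ℂ)*z)^p/(p.factorial:ℂ)‖ = t^p/(p.factorial:ℝ) := by
    intro z hz p
    rw [norm_div, norm_pow, norm_mul, hz, mul_one, Complex.norm_real,
      Real.norm_of_nonneg ht.le, Complex.norm_natCast]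
  have hsum_exp : Summable (fun p:ℕ => t^p/(p.factorial:ℝ)) :=
    Real.summable_pow_div_factorial t
  have hfs : ∀ j, Summable fun p:ℕ => ‖((t:ℂ)*c j)^p/(p.factorial:ℂ)‖ := fun j =>
    hsum_exp.congr (fun p => (hnorm_term _ (hcnorm j) p).symm)
  have hfs' : ∀ j, Summable fun p:ℕ => ‖((t:ℂ)*(c j)⁻¹)^p/(p.factorial:ℂ)‖ := fun j =>
    hsum_exp.congr (fun p => (hnorm_term _ (hcinvnorm j) p).symm)
  -- STEP B : product of two exponential series
  have hexp_tsum : ∀ z : ℂ, Complex.exp z = ∑' n : ℕ, z^n / n.factorial := by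
    intro z
    rw [Complex.exp_eq_exp_ℂ, NormedSpace.exp_eq_tsum_div]
  have stepB : ∀ j : ℕ, Complex.exp ((t:ℂ) * c j) * Complex.exp ((t:ℂ) * (c j)⁻¹)
      = ∑' pq : ℕ×ℕ, ((t:ℂ)*c j)^pq.1/(pq.1.factorial:ℂ) *
          (((t:ℂ)*(c j)⁻¹)^pq.2/(pq.2.factorial:ℂ)) := by
    intro j
    rw [hexp_tsum, hexp_tsum]
    exact tsum_mul_tsum_of_summable_norm (hfs j) (hfs' j)
  have hFs : ∀ j, Summable fun pq : ℕ×ℕ => ((t:ℂ)*c j)^pq.1/(pq.1.factorial:ℂ) *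
      (((t:ℂ)*(c j)⁻¹)^pq.2/(pq.2.factorial:ℂ)) := fun j =>
    summable_mul_of_summable_norm (f := fun p : ℕ => ((t:ℂ)*c j)^p/(p.factorial:ℂ))
      (g := fun q : ℕ => ((t:ℂ)*(c j)⁻¹)^q/(q.factorial:ℂ)) (hfs j) (hfs' j)
  -- the combined coefficient function
  set g : ℕ×ℕ → ℂ := fun pq =>
    (∑ j ∈ Finset.range a, (c j)^pq.1 * ((c j)⁻¹)^pq.2) *
      ((t^(pq.1+pq.2) / ((pq.1.factorial : ℝ) * (pq.2.factorial : ℝ)) : ℝ) : ℂ) with hgdef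
  -- STEP C : the key identity
  have stepC : ((∑ j ∈ Finset.range a,
      Real.exp (-4 * t * Real.sin (π * ((j : ℝ) + lam) / (a : ℝ)) ^ 2) : ℝ) : ℂ)
      = Complex.exp ((-2*t : ℝ) : ℂ) * ∑' pq : ℕ×ℕ, g pq := by
    rw [Complex.ofReal_sum]
    rw [Finset.sum_congr rfl (fun j _ => stepA j), ← Finset.mul_sum]
    congr 1
    rw [Finset.sum_congr rfl (fun j _ => stepB j)]
    rw [← Summable.tsum_finsetSum (fun j _ => hFs j)]
    refine tsum_congr (fun pq => ?_)
    rw [hgdef]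
    simp only
    rw [Finset.sum_mul]
    refine Finset.sum_congr rfl (fun j _ => ?_)
    push_cast
    ring
  -- besselI as explicit series
  have hbessel : besselI 0 (2*t) = ∑' n:ℕ, t^(2*n)/((n.factorial:ℝ)*n.factorial) := by
    unfold besselI
    refine tsum_congr (fun n => ?_)
    norm_num
  set Tser : ℝ := ∑' n:ℕ, t^(2*n)/((n.factorial:ℝ)*n.factorial) with hTdef
  have hTsum : Summable (fun n:ℕ => t^(2*n)/((n.factorial:ℝ)*n.factorial)) := by
    refine Summable.of_nonneg_of_le (fun n => by positivity) (fun n => ?_)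
      (Real.summable_pow_div_factorial (t^2))
    rw [pow_mul]
    refine div_le_div_of_nonneg_left (by positivity) (by positivity) ?_
    have h1 : (1:ℝ) ≤ (n.factorial:ℝ) := by exact_mod_cast n.factorial_pos
    nlinarith
  -- norm bound for g
  have hcoef_nonneg : ∀ pq : ℕ×ℕ,
      (0:ℝ) ≤ t^(pq.1+pq.2)/((pq.1.factorial:ℝ)*(pq.2.factorial:ℝ)) := fun pq => by positivity
  have hgnorm : ∀ pq : ℕ×ℕ,
      ‖g pq‖ ≤ (a:ℝ) * (t^(pq.1+pq.2)/((pq.1.factorial:ℝ)*(pq.2.factorial:ℝ))) := by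
    intro pq
    rw [hgdef]
    simp only
    rw [norm_mul, Complex.norm_real, Real.norm_of_nonneg (hcoef_nonneg pq)]
    refine mul_le_mul_of_nonneg_right ?_ (hcoef_nonneg pq)
    calc ‖∑ j ∈ Finset.range a, (c j)^pq.1 * ((c j)⁻¹)^pq.2‖
        ≤ ∑ j ∈ Finset.range a, ‖(c j)^pq.1 * ((c j)⁻¹)^pq.2‖ := norm_sum_le _ _
      _ = ∑ j ∈ Finset.range a, 1 := by
          refine Finset.sum_congr rfl (fun j _ => ?_)
          rw [norm_mul, norm_pow, norm_pow, hcnorm, hcinvnorm, one_pow, one_pow, one_mul]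
      _ = (a:ℝ) := by simp
  -- summability of g
  have habs : ∀ p:ℕ, ‖t^p/(p.factorial:ℝ)‖ = t^p/(p.factorial:ℝ) :=
    fun p => Real.norm_of_nonneg (by positivity)
  have hprod : Summable (fun pq : ℕ×ℕ => (t^pq.1/(pq.1.factorial:ℝ)) * (t^pq.2/(pq.2.factorial:ℝ))) :=
    summable_mul_of_summable_norm (f := fun p:ℕ => t^p/(p.factorial:ℝ))
      (g := fun q:ℕ => t^q/(q.factorial:ℝ))
      (hsum_exp.congr fun p => (habs p).symm) (hsum_exp.congr fun p => (habs p).symm)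
  have hgsum : Summable g := by
    refine Summable.of_norm_bounded (hprod.mul_left (a:ℝ)) (fun pq => ?_)
    calc ‖g pq‖ ≤ (a:ℝ) * (t^(pq.1+pq.2)/((pq.1.factorial:ℝ)*(pq.2.factorial:ℝ))) := hgnorm pq
      _ = (a:ℝ) * ((t^pq.1/(pq.1.factorial:ℝ)) * (t^pq.2/(pq.2.factorial:ℝ))) := by
          rw [pow_add]; ring
  have hgnormsum : Summable (fun pq : ℕ×ℕ => ‖g pq‖) := hgsum.norm
  -- diagonal
  set D : Set (ℕ×ℕ) := {pq | pq.1 = pq.2} with hDdef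
  have hDrange : D = Set.range (fun n : ℕ => ((n,n) : ℕ×ℕ)) := by
    ext ⟨p,q⟩
    simp only [hDdef, Set.mem_setOf_eq, Set.mem_range, Prod.ext_iff]
    constructor
    · rintro h; exact ⟨p, rfl, h⟩
    · rintro ⟨n, h1, h2⟩; omega
  have hinj_diag : Function.Injective (fun n : ℕ => ((n,n) : ℕ×ℕ)) :=
    fun x y h => (Prod.ext_iff.mp h).1
  have hdiag_val : ∀ n : ℕ, g (n,n) = (a:ℂ) * ((t^(2*n)/((n.factorial:ℝ)*n.factorial) : ℝ) : ℂ) := by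
    intro n
    rw [hgdef]; simp only
    have h1 : ∀ j ∈ Finset.range a, (c j)^n * ((c j)⁻¹)^n = 1 := fun j _ => by
      rw [← mul_pow, mul_inv_cancel₀ (hcne j), one_pow]
    rw [Finset.sum_congr rfl h1, Finset.sum_const, Finset.card_range]
    have h2 : n + n = 2*n := by ring
    rw [h2]
    simp [nsmul_eq_mul]
  have hDsum : ∑' (x : D), g x = (a:ℂ) * ((Tser : ℝ) : ℂ) := by
    rw [hDrange, tsum_range g hinj_diag, tsum_congr hdiag_val, tsum_mul_left, hTdef,
      Complex.ofReal_tsum]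
  -- split into diagonal and off-diagonal
  have hsplit := Summable.tsum_subtype_add_tsum_subtype_compl hgsum D
  set Z : ℂ := ∑' (x : ↑Dᶜ), g ↑x with hZdef
  have key2 : ((∑ j ∈ Finset.range a,
      Real.exp (-4 * t * Real.sin (π * ((j : ℝ) + lam) / (a : ℝ)) ^ 2) : ℝ) : ℂ)
      = Complex.exp ((-2*t : ℝ) : ℂ) * ((a:ℂ) * ((Tser : ℝ) : ℂ) + Z) := by
    rw [stepC, ← hsplit, hDsum]
  have hofe : ((Real.exp (-2*t) : ℝ) : ℂ) = Complex.exp ((-2*t : ℝ) : ℂ) := Complex.ofReal_exp _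
  have hdiff : (((∑ j ∈ Finset.range a,
      Real.exp (-4 * t * Real.sin (π * ((j : ℝ) + lam) / (a : ℝ)) ^ 2))
      - (a : ℝ) * Real.exp (-2 * t) * besselI 0 (2 * t) : ℝ) : ℂ)
      = Complex.exp ((-2*t : ℝ) : ℂ) * Z := by
    rw [Complex.ofReal_sub, key2, hbessel]
    push_cast [hofe]
    ring
  have habs_eq : |(∑ j ∈ Finset.range a,
      Real.exp (-4 * t * Real.sin (π * ((j : ℝ) + lam) / (a : ℝ)) ^ 2))
      - (a : ℝ) * Real.exp (-2 * t) * besselI 0 (2 * t)| = Real.exp (-2*t) * ‖Z‖ := by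
    rw [← Real.norm_eq_abs, ← Complex.norm_real, hdiff, norm_mul, ← hofe, Complex.norm_real,
      Real.norm_of_nonneg (Real.exp_pos _).le]
  -- off-diagonal bound
  have hZ1 : ‖Z‖ ≤ ∑' (x : ↑Dᶜ), ‖g ↑x‖ := norm_tsum_le_tsum_norm (hgnormsum.subtype _)
  set U : Set (ℕ×ℕ) := {pq | pq.2 < pq.1} with hUdef
  set L : Set (ℕ×ℕ) := {pq | pq.1 < pq.2} with hLdef
  have hDc : Dᶜ = U ∪ L := by
    ext ⟨p,q⟩
    simp only [hDdef, hUdef, hLdef, Set.mem_compl_iff, Set.mem_setOf_eq, Set.mem_union]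
    omega
  have hdisj : Disjoint U L := by
    rw [Set.disjoint_left]
    rintro ⟨p,q⟩ hU hL
    simp only [hUdef, hLdef, Set.mem_setOf_eq] at hU hL
    omega
  have hsplit2 : ∑' (x : ↑Dᶜ), ‖g ↑x‖ = (∑' (x : ↑U), ‖g ↑x‖) + ∑' (x : ↑L), ‖g ↑x‖ := by
    rw [hDc]
    exact Summable.tsum_union_disjoint hdisj (hgnormsum.subtype _) (hgnormsum.subtype _)
  -- the dominating product series
  set u : ℕ → ℝ := fun q => (a:ℝ) * (t^(2*q)/((q.factorial:ℝ)*q.factorial)) with hudef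
  set v : ℕ → ℝ := fun d => if (a:ℤ) ∣ ((d:ℤ)+1) then t^(d+1) else 0 with hvdef
  have hu_nonneg : ∀ q, 0 ≤ u q := fun q => by rw [hudef]; positivity
  have hv_nonneg : ∀ d, 0 ≤ v d := fun d => by
    rw [hvdef]; simp only
    by_cases h : (a:ℤ) ∣ ((d:ℤ)+1) <;> simp [h] <;> positivity
  have hu_sum : Summable u := hTsum.mul_left _
  have hv_sum : Summable v := v_summable a t ht.le ht1
  have huv : Summable (fun qd : ℕ×ℕ => u qd.1 * v qd.2) :=
    summable_mul_of_summable_norm (f := u) (g := v) hu_sum.norm hv_sum.norm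
  have huv_tsum : ∑' qd : ℕ×ℕ, u qd.1 * v qd.2 = ((a:ℝ) * Tser) * (t^a/(1-t^a)) := by
    rw [← tsum_mul_tsum_of_summable_norm (f := u) (g := v) hu_sum.norm hv_sum.norm]
    congr 1
    · rw [hudef, tsum_mul_left, hTdef]
    · rw [hvdef]
      exact v_tsum a ha t ht.le ht1
  -- bound for the upper off-diagonal part
  have hUbound : ∑' (x : ↑U), ‖g ↑x‖ ≤ ∑' qd : ℕ×ℕ, u qd.1 * v qd.2 := by
    refine Summable.tsum_le_tsum_of_inj (fun x : ↑U => ((x:ℕ×ℕ).2, (x:ℕ×ℕ).1 - (x:ℕ×ℕ).2 - 1))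
      ?_ (fun c _ => mul_nonneg (hu_nonneg _) (hv_nonneg _)) (fun x => ?_)
      (hgnormsum.subtype _) huv
    · rintro ⟨⟨p,q⟩, hx⟩ ⟨⟨p',q'⟩, hy⟩ h
      have hx' : q < p := hx
      have hy' : q' < p' := hy
      simp only [Prod.mk.injEq] at h
      apply Subtype.ext
      simp only [Prod.mk.injEq]
      omega
    · obtain ⟨⟨p,q⟩, hx⟩ := x
      have hqp : q < p := hx
      simp only
      have hd : ((p - q - 1 : ℕ) : ℤ) + 1 = (p:ℤ) - q := by omega
      by_cases hdvd : (a:ℤ) ∣ ((p:ℤ) - q)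
      · have hdvd' : (a:ℤ) ∣ ((p - q - 1 : ℕ) : ℤ) + 1 := by rw [hd]; exact hdvd
        have hvval : v (p - q - 1) = t^(p-q-1+1) := by
          rw [hvdef]; simp only; rw [if_pos hdvd']
        have hexp2 : p - q - 1 + 1 = p - q := by omega
        have hexp3 : 2*q + (p - q) = p + q := by omega
        calc ‖g (p,q)‖ ≤ (a:ℝ) * (t^(p+q)/((p.factorial:ℝ)*(q.factorial:ℝ))) := hgnorm (p,q)
          _ ≤ (a:ℝ) * (t^(p+q)/((q.factorial:ℝ)*(q.factorial:ℝ))) := by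
              refine mul_le_mul_of_nonneg_left ?_ (by positivity)
              refine div_le_div_of_nonneg_left (by positivity) (by positivity) ?_
              have h1 : (q.factorial:ℝ) ≤ (p.factorial:ℝ) := by
                exact_mod_cast Nat.factorial_le hqp.le
              have h2 : (0:ℝ) < q.factorial := by positivity
              nlinarith
          _ = u q * v (p-q-1) := by
              rw [hvval, hudef]
              simp only
              rw [hexp2, ← hexp3, pow_add]
              ring
      · have hS := sum_root_vanish a ha lam p q hdvd
        have hvval : v (p-q-1) = 0 := by
          rw [hvdef]; simp only
          rw [if_neg (fun h => hdvd (hd ▸ h))]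
        rw [hgdef]
        simp only [hcdef]
        rw [hS, zero_mul, norm_zero, hvval, mul_zero]
  -- bound for the lower off-diagonal part
  have hLbound : ∑' (x : ↑L), ‖g ↑x‖ ≤ ∑' qd : ℕ×ℕ, u qd.1 * v qd.2 := by
    refine Summable.tsum_le_tsum_of_inj (fun x : ↑L => ((x:ℕ×ℕ).1, (x:ℕ×ℕ).2 - (x:ℕ×ℕ).1 - 1))
      ?_ (fun c _ => mul_nonneg (hu_nonneg _) (hv_nonneg _)) (fun x => ?_)
      (hgnormsum.subtype _) huv
    · rintro ⟨⟨p,q⟩, hx⟩ ⟨⟨p',q'⟩, hy⟩ h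
      have hx' : p < q := hx
      have hy' : p' < q' := hy
      simp only [Prod.mk.injEq] at h
      apply Subtype.ext
      simp only [Prod.mk.injEq]
      omega
    · obtain ⟨⟨p,q⟩, hx⟩ := x
      have hpq : p < q := hx
      simp only
      have hd : ((q - p - 1 : ℕ) : ℤ) + 1 = (q:ℤ) - p := by omega
      by_cases hdvd : (a:ℤ) ∣ ((q:ℤ) - p)
      · have hdvd' : (a:ℤ) ∣ ((q - p - 1 : ℕ) : ℤ) + 1 := by rw [hd]; exact hdvd
        have hvval : v (q - p - 1) = t^(q-p-1+1) := by
          rw [hvdef]; simp only; rw [if_pos hdvd']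
        have hexp2 : q - p - 1 + 1 = q - p := by omega
        have hexp3 : 2*p + (q - p) = p + q := by omega
        calc ‖g (p,q)‖ ≤ (a:ℝ) * (t^(p+q)/((p.factorial:ℝ)*(q.factorial:ℝ))) := hgnorm (p,q)
          _ ≤ (a:ℝ) * (t^(p+q)/((p.factorial:ℝ)*(p.factorial:ℝ))) := by
              refine mul_le_mul_of_nonneg_left ?_ (by positivity)
              refine div_le_div_of_nonneg_left (by positivity) (by positivity) ?_
              have h1 : (p.factorial:ℝ) ≤ (q.factorial:ℝ) := by
                exact_mod_cast Nat.factorial_le hpq.le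
              have h2 : (0:ℝ) < p.factorial := by positivity
              nlinarith
          _ = u p * v (q-p-1) := by
              rw [hvval, hudef]
              simp only
              rw [hexp2, ← hexp3, pow_add]
              ring
      · have hdvd2 : ¬ (a:ℤ) ∣ ((p:ℤ) - q) := by
          intro h
          apply hdvd
          have : ((q:ℤ) - p) = -((p:ℤ) - q) := by ring
          rw [this]
          exact dvd_neg.mpr h
        have hS := sum_root_vanish a ha lam p q hdvd2
        have hvval : v (q-p-1) = 0 := by
          rw [hvdef]; simp only
          rw [if_neg (fun h => hdvd (hd ▸ h))]
        rw [hgdef]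
        simp only [hcdef]
        rw [hS, zero_mul, norm_zero, hvval, mul_zero]
  -- put everything together
  have hZ2 : ‖Z‖ ≤ 2 * ((a:ℝ) * Tser * (t^a/(1-t^a))) := by
    calc ‖Z‖ ≤ ∑' (x : ↑Dᶜ), ‖g ↑x‖ := hZ1
      _ = (∑' (x : ↑U), ‖g ↑x‖) + ∑' (x : ↑L), ‖g ↑x‖ := hsplit2
      _ ≤ (∑' qd : ℕ×ℕ, u qd.1 * v qd.2) + ∑' qd : ℕ×ℕ, u qd.1 * v qd.2 :=
          add_le_add hUbound hLbound
      _ = 2 * ((a:ℝ) * Tser * (t^a/(1-t^a))) := by rw [huv_tsum]; ring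
  calc |(∑ j ∈ Finset.range a,
      Real.exp (-4 * t * Real.sin (π * ((j : ℝ) + lam) / (a : ℝ)) ^ 2))
      - (a : ℝ) * Real.exp (-2 * t) * besselI 0 (2 * t)| = Real.exp (-2*t) * ‖Z‖ := habs_eq
    _ ≤ Real.exp (-2*t) * (2 * ((a:ℝ) * Tser * (t^a/(1-t^a)))) :=
        mul_le_mul_of_nonneg_left hZ2 (Real.exp_pos _).le
    _ = 2 * (a : ℝ) * Real.exp (-2 * t) * besselI 0 (2 * t) * (t ^ a / (1 - t ^ a)) := by
        rw [hbessel]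
        ring
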